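/- Let T_obs, T_1, T_2 be independent exponential random variables with rates λ_obs, λ_1, λ_2 > 0, and set X_i = 1 if T_i ≤ T_obs and X_i = 0 otherwise (i = 1, 2). Then X_1 and X_2 are positively correlated and in particular not independent: P(X_1 = 1, X_2 = 1) > P(X_1 = 1) · P(X_2 = 1). -/

import Mathlib

open MeasureTheory ProbabilityTheory Finset

open Real Set Filter
open scoped ENNReal

section TimexHelpers


lemma tmx_int_exp {c : ℝ} (hc : 0 < c) : ∫ t in Ioi (0:ℝ), exp (-(c * t)) = c⁻¹ := by
  have h := integral_comp_mul_left_Ioi (fun x => exp (-x)) 0 hc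
  simp only [mul_zero, integral_exp_neg_Ioi, neg_zero, exp_zero, smul_eq_mul, mul_one] at h
  exact h

lemma tmx_integrable {c : ℝ} (hc : 0 < c) :
    IntegrableOn (fun t : ℝ => exp (-(c * t))) (Ioi 0) := by
  simpa [neg_mul] using exp_neg_integrableOn_Ioi 0 hc

lemma tmx_exp_split {a b t : ℝ} : exp (-((a+b)*t)) = exp (-(a*t)) * exp (-(b*t)) := by
  rw [← exp_add]; ring_nf

lemma tmx_int_one {o r : ℝ} (ho : 0 < o) (hr : 0 < r) :
    ∫ t in Ioi (0:ℝ), o * exp (-(o*t)) * (1 - exp (-(r*t))) = r / (o + r) := by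
  have hor : 0 < o + r := by linarith
  have hpt : ∀ t : ℝ, o * exp (-(o*t)) * (1 - exp (-(r*t)))
      = o * exp (-(o*t)) - o * exp (-((o+r)*t)) := by
    intro t; rw [tmx_exp_split]; ring
  simp_rw [hpt]
  rw [integral_sub ((tmx_integrable ho).const_mul o) ((tmx_integrable hor).const_mul o),
    integral_const_mul, integral_const_mul, tmx_int_exp ho, tmx_int_exp hor]
  field_simp
  ring

lemma tmx_int_two {o r1 r2 : ℝ} (ho : 0 < o) (h1 : 0 < r1) (h2 : 0 < r2) :
    ∫ t in Ioi (0:ℝ), o * exp (-(o*t)) * ((1 - exp (-(r1*t))) * (1 - exp (-(r2*t))))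
      = 1 - o/(o+r1) - o/(o+r2) + o/(o+r1+r2) := by
  have ha : 0 < o + r1 := by linarith
  have hb : 0 < o + r2 := by linarith
  have hc : 0 < o + r1 + r2 := by linarith
  have hpt : ∀ t : ℝ, o * exp (-(o*t)) * ((1 - exp (-(r1*t))) * (1 - exp (-(r2*t))))
      = o * exp (-(o*t)) - o * exp (-((o+r1)*t)) - o * exp (-((o+r2)*t))
        + o * exp (-((o+r1+r2)*t)) := by
    intro t
    rw [tmx_exp_split (a := o+r1) (b := r2), tmx_exp_split (a := o) (b := r1),
      tmx_exp_split (a := o) (b := r2)]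
    ring
  simp_rw [hpt]
  have iA := (tmx_integrable ho).const_mul o
  have iB := (tmx_integrable ha).const_mul o
  have iC := (tmx_integrable hb).const_mul o
  have iD := (tmx_integrable hc).const_mul o
  have iAB : Integrable (fun t : ℝ => o * exp (-(o*t)) - o * exp (-((o+r1)*t)))
      (volume.restrict (Ioi 0)) := iA.sub iB
  have iABC : Integrable
      (fun t : ℝ => o * exp (-(o*t)) - o * exp (-((o+r1)*t)) - o * exp (-((o+r2)*t)))
      (volume.restrict (Ioi 0)) := iAB.sub iC
  rw [integral_add iABC iD, integral_sub iAB iC, integral_sub iA iB,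
    integral_const_mul, integral_const_mul, integral_const_mul, integral_const_mul,
    tmx_int_exp ho, tmx_int_exp ha, tmx_int_exp hb, tmx_int_exp hc]
  field_simp


noncomputable def tmxF (r t : ℝ) : ℝ := if 0 ≤ t then 1 - exp (-(r*t)) else 0

lemma tmxF_nonneg {r : ℝ} (hr : 0 ≤ r) (t : ℝ) : 0 ≤ tmxF r t := by
  unfold tmxF
  split_ifs with h
  · have : -(r*t) ≤ 0 := by nlinarith
    linarith [exp_le_one_iff.mpr this]
  · exact le_refl 0

lemma tmxF_le_one {r : ℝ} (t : ℝ) : tmxF r t ≤ 1 := by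
  unfold tmxF
  split_ifs with h
  · linarith [exp_pos (-(r*t))]
  · exact zero_le_one

lemma tmxF_measurable (r : ℝ) : Measurable (tmxF r) := by
  unfold tmxF
  exact Measurable.ite measurableSet_Ici (by fun_prop) measurable_const

lemma tmx_expMeasure_Iic {r : ℝ} (hr : 0 < r) (t : ℝ) :
    expMeasure r (Iic t) = ENNReal.ofReal (tmxF r t) := by
  rw [show expMeasure r = volume.withDensity (exponentialPDF r) from rfl,
    withDensity_apply _ measurableSet_Iic, lintegral_exponentialPDF_eq_antiDeriv hr t]
  rfl

lemma tmx_integral_expMeasure {o : ℝ} (ho : 0 < o) (h : ℝ → ℝ) :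
    ∫ t, h t ∂(expMeasure o) = ∫ t in Ioi (0:ℝ), o * exp (-(o*t)) * h t := by
  have hmeas : Measurable fun t : ℝ => (exponentialPDFReal o t).toNNReal :=
    (measurable_exponentialPDFReal o).real_toNNReal
  rw [show expMeasure o
      = volume.withDensity (fun t => ((exponentialPDFReal o t).toNNReal : ℝ≥0∞)) from rfl,
    integral_withDensity_eq_integral_smul hmeas]
  have hae : (fun t : ℝ => (exponentialPDFReal o t).toNNReal • h t)
      =ᵐ[volume] (Ioi (0:ℝ)).indicator (fun t => o * exp (-(o*t)) * h t) := by
    have h0 : ∀ᵐ t : ℝ, t ≠ 0 := by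
      refine (ae_iff).2 ?_
      simp only [ne_eq, not_not]
      simpa using measure_singleton (0:ℝ) -- {a | a = 0} = {0}
    filter_upwards [h0] with t ht
    rcases lt_or_gt_of_ne ht with hneg | hpos
    · rw [Set.indicator_of_notMem (show t ∉ Ioi (0:ℝ) by simp [Set.mem_Ioi, not_lt.2 hneg.le])]
      simp [exponentialPDFReal, gammaPDFReal, not_le.2 hneg]
    · rw [Set.indicator_of_mem (show t ∈ Ioi (0:ℝ) from hpos)]
      rw [NNReal.smul_def, Real.coe_toNNReal _ (exponentialPDFReal_nonneg ho t)]
      simp [exponentialPDFReal, gammaPDFReal, hpos.le]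
  rw [integral_congr_ae hae, integral_indicator measurableSet_Ioi]

lemma tmx_lintegral {o : ℝ} (ho : 0 < o) (h : ℝ → ℝ) (hm : Measurable h)
    (h0 : ∀ t, 0 ≤ h t) (h1 : ∀ t, h t ≤ 1) :
    ∫⁻ t, ENNReal.ofReal (h t) ∂(expMeasure o)
      = ENNReal.ofReal (∫ t in Ioi (0:ℝ), o * exp (-(o*t)) * h t) := by
  haveI := isProbabilityMeasure_expMeasure ho
  have hint : Integrable h (expMeasure o) := by
    refine (integrable_const (1:ℝ)).mono' hm.aestronglyMeasurable (ae_of_all _ fun t => ?_)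
    rw [norm_eq_abs, abs_of_nonneg (h0 t)]
    simpa using h1 t
  rw [← ofReal_integral_eq_lintegral_ofReal hint (ae_of_all _ h0), tmx_integral_expMeasure ho]

lemma tmx_iIndepFun_ae_eq {Ω : Type*} [MeasurableSpace Ω] {P : Measure Ω}
    {ι : Type*} [Countable ι] {β : ι → Type*} [m : ∀ i, MeasurableSpace (β i)]
    {f g : ∀ i, Ω → β i} (hfg : ∀ i, f i =ᵐ[P] g i) (h : iIndepFun f P) :
    iIndepFun g P := by
  rw [iIndepFun_iff_measure_inter_preimage_eq_mul] at h ⊢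
  intro S sets hsets
  have hae : ∀ᵐ ω ∂P, ∀ i ∈ S, f i ω = g i ω :=
    (MeasureTheory.ae_ball_iff S.countable_toSet).2 fun i _ => hfg i
  have h1 : (⋂ i ∈ S, g i ⁻¹' sets i) =ᵐ[P] (⋂ i ∈ S, f i ⁻¹' sets i) := by
    rw [Filter.eventuallyEq_set]
    filter_upwards [hae] with ω hω
    simp only [Set.mem_iInter, Set.mem_preimage]
    exact forall₂_congr fun i hi => by rw [hω i hi]
  rw [measure_congr h1, h S hsets]
  refine Finset.prod_congr rfl fun i hi => measure_congr ?_
  rw [Filter.eventuallyEq_set]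
  filter_upwards [hfg i] with ω hω
  simp [Set.mem_preimage, hω]

lemma tmxF_def (r t : ℝ) : tmxF r t = if 0 ≤ t then 1 - exp (-(r*t)) else 0 := rfl

end TimexHelpers

/-- in the two-gene TiMEx null model, the alteration indicators
`X_i = 1 ↔ T_i ≤ T_obs` are positively correlated, in particular not independent:
`P(X_1 = 1, X_2 = 1) > P(X_1 = 1) · P(X_2 = 1)`. -/
theorem timex_two_gene_null_positively_correlated
    {Ω : Type*} [MeasurableSpace Ω] (P : Measure Ω) [IsProbabilityMeasure P]
    (lam1 lam2 lobs : ℝ) (hlam1 : 0 < lam1) (hlam2 : 0 < lam2) (hlobs : 0 < lobs)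
    (T1 T2 Tobs : Ω → ℝ)
    (hT1 : Measure.map T1 P = expMeasure lam1)
    (hT2 : Measure.map T2 P = expMeasure lam2)
    (hTobs : Measure.map Tobs P = expMeasure lobs)
    (hindep : iIndepFun ![Tobs, T1, T2] P) :
    (P {ω | T1 ω ≤ Tobs ω ∧ T2 ω ≤ Tobs ω}).toReal >
      (P {ω | T1 ω ≤ Tobs ω}).toReal * (P {ω | T2 ω ≤ Tobs ω}).toReal := by
  haveI := isProbabilityMeasure_expMeasure hlam1
  haveI := isProbabilityMeasure_expMeasure hlam2
  haveI := isProbabilityMeasure_expMeasure hlobs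
  -- a.e.-measurability of the three variables
  have hae : ∀ (T : Ω → ℝ) (r : ℝ), 0 < r → Measure.map T P = expMeasure r → AEMeasurable T P := by
    intro T r hr hmap
    by_contra hc
    have h0 := (isProbabilityMeasure_expMeasure hr).measure_univ
    rw [← hmap, Measure.map_of_not_aemeasurable hc] at h0
    simp at h0
  have hP1 := hae T1 lam1 hlam1 hT1
  have hP2 := hae T2 lam2 hlam2 hT2
  have hP0 := hae Tobs lobs hlobs hTobs
  set T1' := hP1.mk T1 with hT1'
  set T2' := hP2.mk T2 with hT2'
  set Tobs' := hP0.mk Tobs with hTobs'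
  have hm1 : Measurable T1' := hP1.measurable_mk
  have hm2 : Measurable T2' := hP2.measurable_mk
  have hm0 : Measurable Tobs' := hP0.measurable_mk
  have he1 : T1 =ᵐ[P] T1' := hP1.ae_eq_mk
  have he2 : T2 =ᵐ[P] T2' := hP2.ae_eq_mk
  have he0 : Tobs =ᵐ[P] Tobs' := hP0.ae_eq_mk
  have hmap1 : Measure.map T1' P = expMeasure lam1 := by rw [← Measure.map_congr he1, hT1]
  have hmap2 : Measure.map T2' P = expMeasure lam2 := by rw [← Measure.map_congr he2, hT2]
  have hmap0 : Measure.map Tobs' P = expMeasure lobs := by rw [← Measure.map_congr he0, hTobs]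
  have hindep' : iIndepFun ![Tobs', T1', T2'] P := by
    refine tmx_iIndepFun_ae_eq (f := ![Tobs, T1, T2]) ?_ hindep
    intro i
    fin_cases i
    · simpa using he0
    · simpa using he1
    · simpa using he2
  have hmeas : ∀ i, Measurable (![Tobs', T1', T2'] i) := by
    intro i; fin_cases i
    · simpa using hm0
    · simpa using hm1
    · simpa using hm2
  -- single-gene probabilities
  have key : ∀ (S : Ω → ℝ) (r : ℝ), 0 < r → Measurable S → Measure.map S P = expMeasure r →
      IndepFun Tobs' S P → P {ω | S ω ≤ Tobs' ω} = ENNReal.ofReal (r / (lobs + r)) := by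
    intro S r hr hSm hSmap hind
    haveI := isProbabilityMeasure_expMeasure hr
    have hmapP : Measure.map (fun ω => (Tobs' ω, S ω)) P
        = (expMeasure lobs).prod (expMeasure r) := by
      rw [(indepFun_iff_map_prod_eq_prod_map_map hm0.aemeasurable hSm.aemeasurable).1 hind,
        hmap0, hSmap]
    have hset : MeasurableSet {p : ℝ × ℝ | p.2 ≤ p.1} :=
      measurableSet_le measurable_snd measurable_fst
    have hPev : P {ω | S ω ≤ Tobs' ω}
        = ((expMeasure lobs).prod (expMeasure r)) {p : ℝ × ℝ | p.2 ≤ p.1} := by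
      rw [← hmapP, Measure.map_apply (hm0.prodMk hSm) hset]
      rfl
    rw [hPev, Measure.prod_apply hset]
    have hpre : ∀ t : ℝ, (Prod.mk t ⁻¹' {p : ℝ × ℝ | p.2 ≤ p.1}) = Iic t := fun t => rfl
    simp_rw [hpre, tmx_expMeasure_Iic hr]
    rw [tmx_lintegral hlobs (tmxF r) (tmxF_measurable r) (tmxF_nonneg hr.le) tmxF_le_one]
    congr 1
    rw [setIntegral_congr_fun measurableSet_Ioi
      (fun t (ht : t ∈ Ioi (0:ℝ)) => by rw [tmxF_def, if_pos (le_of_lt ht)]),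
      tmx_int_one hlobs hr]
  have hind1 : IndepFun Tobs' T1' P := by
    have h := hindep'.indepFun (show (0 : Fin 3) ≠ 1 by decide)
    simpa using h
  have hind2 : IndepFun Tobs' T2' P := by
    have h := hindep'.indepFun (show (0 : Fin 3) ≠ 2 by decide)
    simpa using h
  have hp1 : P {ω | T1' ω ≤ Tobs' ω} = ENNReal.ofReal (lam1 / (lobs + lam1)) :=
    key T1' lam1 hlam1 hm1 hmap1 hind1
  have hp2 : P {ω | T2' ω ≤ Tobs' ω} = ENNReal.ofReal (lam2 / (lobs + lam2)) :=
    key T2' lam2 hlam2 hm2 hmap2 hind2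
  -- joint probability
  have hindPair : IndepFun T1' T2' P := by
    have h := hindep'.indepFun (show (1 : Fin 3) ≠ 2 by decide)
    simpa using h
  have hmapPair : Measure.map (fun ω => (T1' ω, T2' ω)) P
      = (expMeasure lam1).prod (expMeasure lam2) := by
    rw [(indepFun_iff_map_prod_eq_prod_map_map hm1.aemeasurable hm2.aemeasurable).1 hindPair,
      hmap1, hmap2]
  have hindT : IndepFun Tobs' (fun ω => (T1' ω, T2' ω)) P := by
    have h := hindep'.indepFun_prodMk hmeas 1 2 0 (by decide) (by decide)
    simp only [Matrix.cons_val_one, Matrix.head_cons, Matrix.cons_val_zero] at h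
    exact h.symm
  have hmapT : Measure.map (fun ω => (Tobs' ω, (T1' ω, T2' ω))) P
      = (expMeasure lobs).prod ((expMeasure lam1).prod (expMeasure lam2)) := by
    rw [(indepFun_iff_map_prod_eq_prod_map_map hm0.aemeasurable
        (hm1.prodMk hm2).aemeasurable).1 hindT, hmap0, hmapPair]
  have hsetJ : MeasurableSet {p : ℝ × (ℝ × ℝ) | p.2.1 ≤ p.1 ∧ p.2.2 ≤ p.1} := by
    rw [Set.setOf_and]
    exact (measurableSet_le (measurable_fst.comp measurable_snd) measurable_fst).inter
      (measurableSet_le (measurable_snd.comp measurable_snd) measurable_fst)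
  have hPJ : P {ω | T1' ω ≤ Tobs' ω ∧ T2' ω ≤ Tobs' ω}
      = ENNReal.ofReal (1 - lobs/(lobs+lam1) - lobs/(lobs+lam2) + lobs/(lobs+lam1+lam2)) := by
    have hPev : P {ω | T1' ω ≤ Tobs' ω ∧ T2' ω ≤ Tobs' ω}
        = ((expMeasure lobs).prod ((expMeasure lam1).prod (expMeasure lam2)))
          {p : ℝ × (ℝ × ℝ) | p.2.1 ≤ p.1 ∧ p.2.2 ≤ p.1} := by
      rw [← hmapT, Measure.map_apply (hm0.prodMk (hm1.prodMk hm2)) hsetJ]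
      rfl
    rw [hPev, Measure.prod_apply hsetJ]
    have hpre : ∀ t : ℝ, (Prod.mk t ⁻¹' {p : ℝ × (ℝ × ℝ) | p.2.1 ≤ p.1 ∧ p.2.2 ≤ p.1})
        = Iic t ×ˢ Iic t := by
      intro t; ext x
      simp only [Set.mem_preimage, Set.mem_setOf_eq, Set.mem_prod, Set.mem_Iic]
    simp_rw [hpre, Measure.prod_prod, tmx_expMeasure_Iic hlam1, tmx_expMeasure_Iic hlam2,
      ← ENNReal.ofReal_mul (tmxF_nonneg hlam1.le _)]
    rw [tmx_lintegral hlobs (fun t => tmxF lam1 t * tmxF lam2 t)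
      ((tmxF_measurable lam1).mul (tmxF_measurable lam2))
      (fun t => mul_nonneg (tmxF_nonneg hlam1.le t) (tmxF_nonneg hlam2.le t))
      (fun t => mul_le_one₀ (tmxF_le_one t) (tmxF_nonneg hlam2.le t) (tmxF_le_one t))]
    congr 1
    rw [setIntegral_congr_fun measurableSet_Ioi
      (fun t (ht : t ∈ Ioi (0:ℝ)) => by
        rw [tmxF_def, tmxF_def, if_pos (le_of_lt ht), if_pos (le_of_lt ht)]),
      tmx_int_two hlobs hlam1 hlam2]
  -- transfer back to the original variables
  have hev : ∀ (f g f' g' : Ω → ℝ), f =ᵐ[P] f' → g =ᵐ[P] g' →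
      P {ω | f ω ≤ g ω} = P {ω | f' ω ≤ g' ω} := by
    intro f g f' g' hf hg
    refine measure_congr ?_
    rw [Filter.eventuallyEq_set]
    filter_upwards [hf, hg] with ω h1 h2
    simp [h1, h2]
  have hevJ : P {ω | T1 ω ≤ Tobs ω ∧ T2 ω ≤ Tobs ω}
      = P {ω | T1' ω ≤ Tobs' ω ∧ T2' ω ≤ Tobs' ω} := by
    refine measure_congr ?_
    rw [Filter.eventuallyEq_set]
    filter_upwards [he0, he1, he2] with ω h0 h1 h2
    simp [h0, h1, h2]
  rw [hevJ, hev T1 Tobs T1' Tobs' he1 he0, hev T2 Tobs T2' Tobs' he2 he0, hPJ, hp1, hp2]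
  have ha : (0:ℝ) < lobs + lam1 := by linarith
  have hb : (0:ℝ) < lobs + lam2 := by linarith
  have hc : (0:ℝ) < lobs + lam1 + lam2 := by linarith
  have hdiff : 1 - lobs/(lobs+lam1) - lobs/(lobs+lam2) + lobs/(lobs+lam1+lam2)
      - (lam1/(lobs+lam1)) * (lam2/(lobs+lam2))
      = lobs*lam1*lam2/((lobs+lam1)*((lobs+lam2)*(lobs+lam1+lam2))) := by
    field_simp
    ring
  have hquot : (0:ℝ) < lobs*lam1*lam2/((lobs+lam1)*((lobs+lam2)*(lobs+lam1+lam2))) := by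
    positivity
  have hprodnn : (0:ℝ) ≤ (lam1/(lobs+lam1)) * (lam2/(lobs+lam2)) := by positivity
  rw [ENNReal.toReal_ofReal (by linarith), ENNReal.toReal_ofReal (by positivity),
    ENNReal.toReal_ofReal (by positivity)]
  linarith
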